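/- For all natural numbers m, n, k, one has (as integers) C(m,n,k) = Σ_{i=0}^{n} (-1)^i · binom(n,i) · binom(m + 2n - 2i, n + k). -/
import Mathlib


open Finset
open Polynomial

/-- The set of ternary words of length `m + n` (as functions `Fin (m+n) → Fin 3`)
having exactly `k` letters equal to `2` and no letter equal to `0` among the
first `m` letters. -/
def ternaryWords (m n k : ℕ) : Finset (Fin (m + n) → Fin 3) :=
  univ.filter fun w =>
    (univ.filter fun i => w i = 2).card = k ∧ ∀ i : Fin (m + n), (i : ℕ) < m → w i ≠ 0

/-- `C m n k` is the number of ternary words of length `m + n` with exactly `k`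
twos and no zero among the first `m` letters; it equals the inset number
`{m,n choose k}` of Janjić–Petković. -/
def C (m n k : ℕ) : ℕ := (ternaryWords m n k).card

theorem stmt_1 (m n k : ℕ) :
    (C m n k : ℤ) =
      ∑ i ∈ Finset.range (n + 1),
        (-1 : ℤ) ^ i * (n.choose i) * ((m + 2 * n - 2 * i).choose (n + k)) := by
  classical
  set A : Fin (m + n) → Finset (Fin 3) :=
    fun i => if (i : ℕ) < m then ({1, 2} : Finset (Fin 3)) else univ with hA
  have hcardm : (univ.filter fun i : Fin (m + n) => (i : ℕ) < m).card = m := by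
    have : (univ.filter fun i : Fin (m + n) => (i : ℕ) < m)
        = Finset.map (Fin.castAddEmb n) univ := by
      ext i
      constructor
      · intro h
        rw [mem_filter] at h
        rw [Finset.mem_map]
        exact ⟨⟨(i : ℕ), h.2⟩, mem_univ _, Fin.ext rfl⟩
      · intro h
        rw [Finset.mem_map] at h
        obtain ⟨j, -, rfl⟩ := h
        simp only [mem_filter, mem_univ, true_and]
        simp
    simp [this]
  -- Step 1: generating polynomial
  have key : ((1 + X) ^ m * (2 + X) ^ n : ℤ[X]) =
      ∑ w ∈ Fintype.piFinset A, X ^ (univ.filter fun i => w i = 2).card := by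
    have h1 : ((1 + X) ^ m * (2 + X) ^ n : ℤ[X]) =
        ∏ i : Fin (m + n), ∑ v ∈ A i, X ^ (if v = 2 then 1 else 0) := by
      have : ∀ i : Fin (m + n),
          (∑ v ∈ A i, (X : ℤ[X]) ^ (if v = 2 then 1 else 0)) =
            if (i : ℕ) < m then (1 + X) else (2 + X) := by
        intro i
        by_cases h : (i : ℕ) < m <;> simp [hA, h, Fin.sum_univ_three] <;> ring
      rw [Finset.prod_congr rfl fun i _ => this i]
      rw [Finset.prod_ite, Finset.prod_const, Finset.prod_const, hcardm]
      congr 1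
      rw [Finset.filter_not, Finset.card_sdiff_of_subset (filter_subset _ _), hcardm]
      simp
    rw [h1, Finset.prod_univ_sum]
    refine Finset.sum_congr rfl fun w _ => ?_
    rw [Finset.prod_pow_eq_pow_sum]
    congr 1
    rw [Finset.card_filter]
  -- Step 2: C m n k is the k-th coefficient
  have hC : (C m n k : ℤ) = ((1 + X) ^ m * (2 + X) ^ n : ℤ[X]).coeff k := by
    rw [key, Polynomial.finset_sum_coeff]
    have : ∀ w ∈ Fintype.piFinset A,
        ((X : ℤ[X]) ^ (univ.filter fun i => w i = 2).card).coeff k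
          = if k = (univ.filter fun i => w i = 2).card then 1 else 0 := by
      intro w _
      rw [Polynomial.coeff_X_pow]
    rw [Finset.sum_congr rfl this, Finset.sum_boole]
    congr 1
    have : ternaryWords m n k =
        (Fintype.piFinset A).filter fun w => k = (univ.filter fun i => w i = 2).card := by
      ext w
      simp only [ternaryWords, mem_filter, mem_univ, true_and, Fintype.mem_piFinset]
      constructor
      · rintro ⟨h1, h2⟩
        refine ⟨fun i => ?_, h1.symm⟩
        by_cases h : (i : ℕ) < m
        · have := h2 i h
          simp only [hA, if_pos h, Finset.mem_insert, Finset.mem_singleton]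
          omega
        · simp [hA, h]
      · rintro ⟨h1, h2⟩
        refine ⟨h2.symm, fun i hi => ?_⟩
        have := h1 i
        simp only [hA, if_pos hi, Finset.mem_insert, Finset.mem_singleton] at this
        omega
    rw [show _root_.C m n k = (ternaryWords m n k).card from rfl, this]
  rw [hC]
  -- Step 3: algebra
  have hXP : ((1 + X) ^ m * (2 + X) ^ n * X ^ n : ℤ[X]) =
      (1 + X) ^ m * (-1 + (1 + X) ^ 2) ^ n := by
    rw [mul_assoc, ← mul_pow]
    ring_nf
  have hcoeff : ((1 + X) ^ m * (2 + X) ^ n : ℤ[X]).coeff k =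
      (((1 + X) ^ m * (2 + X) ^ n : ℤ[X]) * X ^ n).coeff (k + n) :=
    (Polynomial.coeff_mul_X_pow _ _ _).symm
  have hexp := add_pow (-1 : ℤ[X]) ((1 + X) ^ 2) n
  rw [hcoeff, hXP, hexp, Finset.mul_sum, Polynomial.finset_sum_coeff]
  refine Finset.sum_congr rfl fun i hi => ?_
  rw [Finset.mem_range] at hi
  have hterm : ((1 + X : ℤ[X]) ^ m * ((-1) ^ i * ((1 + X) ^ 2) ^ (n - i) * (n.choose i : ℤ[X]))) =
      Polynomial.C ((-1) ^ i * (n.choose i : ℤ)) * (1 + X) ^ (m + 2 * (n - i)) := by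
    rw [← pow_mul, map_mul, map_pow, map_neg, map_one, Polynomial.C_eq_natCast, pow_add]
    push_cast
    ring
  rw [hterm, Polynomial.coeff_C_mul, Polynomial.coeff_one_add_X_pow]
  have h1 : m + 2 * (n - i) = m + 2 * n - 2 * i := by omega
  have h2 : k + n = n + k := by omega
  rw [h1, h2]
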